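/- arXiv:1706.10219 — 2 statements merged into one kernel-verified Lean document; each statement's English description precedes it below -/
import Mathlib

section
/- For a continuous function f, the Lanczos derivative f'_{LDI}(x,h) = (3/(2h³)) · ∫_{x−h}^{x+h} (t−x)·f(t) dt converges to f'(x) as h → 0⁺ whenever f is differentiable at x. -/
open intervalIntegral Filter

lemma lanczos_int1 (x h : ℝ) : (∫ t in (x - h)..(x + h), (t - x)) = 0 := by
  rw [intervalIntegral.integral_comp_sub_right (fun u => u) x, integral_id]
  ring

lemma lanczos_int2 (x h : ℝ) : (∫ t in (x - h)..(x + h), (t - x) ^ 2) = 2 * h ^ 3 / 3 := by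
  rw [intervalIntegral.integral_comp_sub_right (fun u => u ^ 2) x, integral_pow]
  ring

theorem lanczos_derivative_tendsto (f : ℝ → ℝ) (x f' : ℝ)
    (hcont : ∃ ε > 0, ContinuousOn f (Set.Ioo (x - ε) (x + ε)))
    (hderiv : HasDerivAt f f' x) :
    Tendsto (fun h : ℝ => (3 / (2 * h ^ 3)) * ∫ t in (x - h)..(x + h), (t - x) * f t)
      (nhdsWithin 0 (Set.Ioi 0)) (nhds f') := by
  obtain ⟨ε₀, hε₀, hf⟩ := hcont
  rw [Metric.tendsto_nhdsWithin_nhds]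
  intro ε hε
  have hlo := hasDerivAt_iff_isLittleO.mp hderiv
  rw [Asymptotics.isLittleO_iff] at hlo
  have h2 := hlo (show (0:ℝ) < ε / 2 by linarith)
  rw [Metric.eventually_nhds_iff] at h2
  obtain ⟨δ₁, hδ₁, hbound⟩ := h2
  refine ⟨min δ₁ ε₀, by positivity, ?_⟩
  intro h hh hdist
  simp only [Set.mem_Ioi] at hh
  rw [Real.dist_eq, sub_zero, abs_of_pos hh] at hdist
  have hhδ₁ : h < δ₁ := lt_of_lt_of_le hdist (min_le_left _ _)
  have hhε₀ : h < ε₀ := lt_of_lt_of_le hdist (min_le_right _ _)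
  have hle : x - h ≤ x + h := by linarith
  have hsub : Set.uIcc (x - h) (x + h) ⊆ Set.Ioo (x - ε₀) (x + ε₀) := by
    rw [Set.uIcc_of_le hle]
    intro t ht
    exact ⟨by linarith [ht.1], by linarith [ht.2]⟩
  have hfc : ContinuousOn f (Set.uIcc (x - h) (x + h)) := hf.mono hsub
  have hgc : ContinuousOn (fun t => (t - x) * f t) (Set.uIcc (x - h) (x + h)) :=
    (continuousOn_id.sub continuousOn_const).mul hfc
  have hint : IntervalIntegrable (fun t => (t - x) * f t) MeasureTheory.volume
      (x - h) (x + h) := hgc.intervalIntegrable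
  have hc1 : Continuous (fun t : ℝ => t - x) := continuous_id.sub continuous_const
  have hpoly : IntervalIntegrable (fun t => f x * (t - x) + f' * (t - x) ^ 2)
      MeasureTheory.volume (x - h) (x + h) :=
    ((continuous_const.mul hc1).add (continuous_const.mul (hc1.pow 2))).intervalIntegrable _ _
  have hrint : IntervalIntegrable (fun t => (t - x) * (f t - f x - (t - x) * f'))
      MeasureTheory.volume (x - h) (x + h) := by
    apply ContinuousOn.intervalIntegrable
    exact (continuousOn_id.sub continuousOn_const).mul
      ((hfc.sub continuousOn_const).sub ((continuousOn_id.sub continuousOn_const).mul continuousOn_const))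
  -- split the integral
  have e1 : (fun t => (t - x) * (f t - f x - (t - x) * f'))
      = fun t => (t - x) * f t - (f x * (t - x) + f' * (t - x) ^ 2) := by
    funext t; ring
  have split : (∫ t in (x - h)..(x + h), (t - x) * (f t - f x - (t - x) * f'))
      = (∫ t in (x - h)..(x + h), (t - x) * f t) - f' * (2 * h ^ 3 / 3) := by
    rw [e1, intervalIntegral.integral_sub hint hpoly,
      intervalIntegral.integral_add (f := fun t => f x * (t - x)) (g := fun t => f' * (t - x) ^ 2)
        ((continuous_const.mul hc1).intervalIntegrable _ _)
        ((continuous_const.mul (hc1.pow 2)).intervalIntegrable _ _),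
      intervalIntegral.integral_const_mul, intervalIntegral.integral_const_mul,
      lanczos_int1, lanczos_int2]
    ring
  have hI : (∫ t in (x - h)..(x + h), (t - x) * f t) = f' * (2 * h ^ 3 / 3)
      + ∫ t in (x - h)..(x + h), (t - x) * (f t - f x - (t - x) * f') := by
    linarith [split]
  -- bound R
  set R := ∫ t in (x - h)..(x + h), (t - x) * (f t - f x - (t - x) * f') with hR
  have hRbound : |R| ≤ ε / 2 * (2 * h ^ 3 / 3) := by
    have hb : ∀ t ∈ Set.Icc (x - h) (x + h),
        |(t - x) * (f t - f x - (t - x) * f')| ≤ ε / 2 * (t - x) ^ 2 := by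
      intro t ht
      rw [Set.mem_Icc] at ht
      have hdt : dist t x < δ₁ := by
        rw [Real.dist_eq]
        have : |t - x| ≤ h := abs_le.mpr ⟨by linarith, by linarith⟩
        linarith
      have := hbound hdt
      simp only [Real.norm_eq_abs, smul_eq_mul] at this
      have h3 : |(t - x) * (f t - f x - (t - x) * f')|
          = |t - x| * |f t - f x - (t - x) * f'| := abs_mul _ _
      rw [h3]
      calc |t - x| * |f t - f x - (t - x) * f'|
          ≤ |t - x| * (ε / 2 * |t - x|) :=
            mul_le_mul_of_nonneg_left this (abs_nonneg _)
        _ = ε / 2 * (t - x) ^ 2 := by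
            rw [← sq_abs (t - x)]; ring
    have habs : |R| ≤ ∫ t in (x - h)..(x + h), |(t - x) * (f t - f x - (t - x) * f')| := by
      exact intervalIntegral.abs_integral_le_integral_abs hle
    have hmono : (∫ t in (x - h)..(x + h), |(t - x) * (f t - f x - (t - x) * f')|)
        ≤ ∫ t in (x - h)..(x + h), ε / 2 * (t - x) ^ 2 := by
      apply intervalIntegral.integral_mono_on hle hrint.abs
        ((continuous_const.mul (hc1.pow 2)).intervalIntegrable _ _) hb
    have hval : (∫ t in (x - h)..(x + h), ε / 2 * (t - x) ^ 2)
        = ε / 2 * (2 * h ^ 3 / 3) := by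
      rw [intervalIntegral.integral_const_mul, lanczos_int2]
    linarith
  -- conclude
  have hh3 : (0:ℝ) < h ^ 3 := by positivity
  rw [Real.dist_eq, hI]
  have hexp : 3 / (2 * h ^ 3) * (f' * (2 * h ^ 3 / 3) + R) - f'
      = 3 / (2 * h ^ 3) * R := by
    field_simp
    ring
  rw [hexp, abs_mul]
  have hc : |3 / (2 * h ^ 3)| = 3 / (2 * h ^ 3) := abs_of_pos (by positivity)
  rw [hc]
  calc 3 / (2 * h ^ 3) * |R| ≤ 3 / (2 * h ^ 3) * (ε / 2 * (2 * h ^ 3 / 3)) := by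
        apply mul_le_mul_of_nonneg_left hRbound (by positivity)
    _ = ε / 2 := by field_simp
    _ < ε := by linarith
end

section
/- If the step H is a random variable uniformly distributed on [h/2, 3h/2] and f is C³ near x with f''' continuous, then the expectation E[Dc(f,x,H)] differs from f'(x) by (13h²/72)·f'''(x) + o(h²) as h → 0⁺; in particular E[Dc(f,x,H)] → f'(x). -/
open Filter intervalIntegral

set_option maxHeartbeats 1000000

private lemma hasFTaylor_congr_p {n : WithTop ℕ∞} {f : ℝ → ℝ}
    {p q : ℝ → FormalMultilinearSeries ℝ ℝ ℝ} {s : Set ℝ}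
    (h : HasFTaylorSeriesUpToOn n f p s) (hpq : ∀ x ∈ s, p x = q x) :
    HasFTaylorSeriesUpToOn n f q s := by
  constructor
  · intro x hx; rw [← hpq x hx]; exact h.zero_eq x hx
  · intro m hm x hx
    rw [← hpq x hx]
    exact (h.fderivWithin m hm x hx).congr
      (fun y hy => (congrFun (hpq y hy) m).symm) (congrFun (hpq x hx) m).symm
  · intro m hm
    exact (h.cont m hm).congr fun y hy => (congrFun (hpq y hy) m).symm

private lemma iterDeriv_open (f : ℝ → ℝ) {U : Set ℝ} (hU : IsOpen U) (m : ℕ)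
    {y : ℝ} (hy : y ∈ U) : iteratedDerivWithin m f U y = iteratedDeriv m f y := by
  rw [iteratedDerivWithin_eq_iteratedFDerivWithin, iteratedDeriv_eq_iteratedFDeriv,
    iteratedFDerivWithin_of_isOpen m hU hy]

private lemma iterDeriv_Icc (f : ℝ → ℝ) {U : Set ℝ} (hU : IsOpen U)
    (hf : ContDiffOn ℝ 3 f U) {a b : ℝ} (hab : a < b) (hsub : Set.Icc a b ⊆ U)
    {m : ℕ} (hm : m ≤ 3) {y : ℝ} (hy : y ∈ Set.Icc a b) :
    iteratedDerivWithin m f (Set.Icc a b) y = iteratedDeriv m f y := by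
  have hpq : ∀ z ∈ U, ftaylorSeriesWithin ℝ f U z = ftaylorSeries ℝ f z := by
    intro z hz
    ext k : 1
    exact iteratedFDerivWithin_of_isOpen k hU hz
  have H : HasFTaylorSeriesUpToOn 3 f (ftaylorSeries ℝ f) U :=
    hasFTaylor_congr_p (hf.ftaylorSeriesWithin hU.uniqueDiffOn) hpq
  have h2 := (H.mono hsub).eq_iteratedFDerivWithin_of_uniqueDiffOn
    (m := m) (by exact_mod_cast hm) (uniqueDiffOn_Icc hab) hy
  rw [iteratedDerivWithin_eq_iteratedFDerivWithin, ← h2, iteratedDeriv_eq_iteratedFDeriv]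
  rfl

private lemma taylor2_right (f : ℝ → ℝ) (x : ℝ) {U : Set ℝ} (hU : IsOpen U)
    (hf : ContDiffOn ℝ 3 f U) {s : ℝ} (hs : 0 < s) (hsub : Set.Icc x (x + s) ⊆ U) :
    ∃ c ∈ Set.Ioo x (x + s), f (x + s) =
      f x + s * deriv f x + s ^ 2 / 2 * iteratedDeriv 2 f x
        + s ^ 3 / 6 * iteratedDeriv 3 f c := by
  have hx : x < x + s := by linarith
  have hIcc : ∀ {m : ℕ}, m ≤ 3 → ∀ {y : ℝ}, y ∈ Set.Icc x (x + s) →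
      iteratedDerivWithin m f (Set.Icc x (x + s)) y = iteratedDeriv m f y :=
    fun hm _ hy => iterDeriv_Icc f hU hf hx hsub hm hy
  have hf2 : ContDiffOn ℝ 2 f (Set.Icc x (x + s)) := (hf.mono hsub).of_le (by norm_num)
  have h1 : DifferentiableOn ℝ (iteratedDerivWithin 2 f U) U :=
    hf.differentiableOn_iteratedDerivWithin (by norm_num) hU.uniqueDiffOn
  have h2 : DifferentiableOn ℝ (iteratedDeriv 2 f) U :=
    h1.congr fun y hy => (iterDeriv_open f hU 2 hy).symm
  have hd : DifferentiableOn ℝ (iteratedDerivWithin 2 f (Set.Icc x (x + s)))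
      (Set.Ioo x (x + s)) :=
    (h2.mono (Set.Ioo_subset_Icc_self.trans hsub)).congr
      fun y hy => hIcc (by norm_num) (Set.Ioo_subset_Icc_self hy)
  obtain ⟨c, hc, hEq⟩ := taylor_mean_remainder_lagrange (n := 2) hx.ne
    (by rwa [Set.uIcc_of_le hx.le]) (by rwa [Set.uIcc_of_le hx.le, Set.uIoo_of_le hx.le])
  rw [Set.uIoo_of_le hx.le] at hc
  rw [Set.uIcc_of_le hx.le] at hEq
  refine ⟨c, hc, ?_⟩
  rw [taylor_within_apply] at hEq
  simp only [Finset.sum_range_succ, Finset.sum_range_zero, smul_eq_mul] at hEq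
  rw [hIcc (by norm_num) (Set.left_mem_Icc.mpr hx.le),
    hIcc (by norm_num) (Set.left_mem_Icc.mpr hx.le),
    hIcc (by norm_num) (Set.left_mem_Icc.mpr hx.le),
    hIcc (le_refl 3) (Set.Ioo_subset_Icc_self hc)] at hEq
  simp only [iteratedDeriv_zero, iteratedDeriv_one, add_sub_cancel_left] at hEq
  norm_num [Nat.factorial] at hEq
  linear_combination hEq

private lemma taylor2_left (f : ℝ → ℝ) (x : ℝ) {U : Set ℝ} (hU : IsOpen U)
    (hf : ContDiffOn ℝ 3 f U) {s : ℝ} (hs : 0 < s) (hsub : Set.Icc (x - s) x ⊆ U) :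
    ∃ c ∈ Set.Ioo (x - s) x, f (x - s) =
      f x - s * deriv f x + s ^ 2 / 2 * iteratedDeriv 2 f x
        - s ^ 3 / 6 * iteratedDeriv 3 f c := by
  set g : ℝ → ℝ := fun t => f (2 * x - t) with hg
  set V : Set ℝ := (fun t : ℝ => 2 * x - t) ⁻¹' U with hV
  have hrefl : Continuous fun t : ℝ => 2 * x - t := continuous_const.sub continuous_id
  have hVopen : IsOpen V := hU.preimage hrefl
  have hgC : ContDiffOn ℝ 3 g V :=
    hf.comp ((contDiff_const.sub contDiff_id).contDiffOn) (fun t ht => ht)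
  have hder : ∀ (m : ℕ) (y : ℝ), iteratedDeriv m g y = (-1) ^ m * iteratedDeriv m f (2 * x - y) := by
    intro m y
    have e1 : g = fun t => (fun z => f (2 * x + z)) (-t) := by
      funext t; simp [hg, sub_eq_add_neg]
    rw [e1, iteratedDeriv_comp_neg m (fun z => f (2 * x + z)) y,
      iteratedDeriv_comp_const_add m f (2 * x)]
    simp [sub_eq_add_neg]
  have hsubV : Set.Icc x (x + s) ⊆ V := by
    intro t ht
    simp only [hV, Set.mem_preimage]
    apply hsub
    obtain ⟨h1, h2⟩ := ht
    exact ⟨by linarith, by linarith⟩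
  obtain ⟨c, hc, hEq⟩ := taylor2_right g x hVopen hgC hs hsubV
  refine ⟨2 * x - c, ⟨by cases' hc with h1 h2; linarith, by cases' hc with h1 h2; linarith⟩, ?_⟩
  have e2 : g (x + s) = f (x - s) := by simp [hg]; ring_nf
  have e3 : g x = f x := by simp [hg]; ring_nf
  have e4 : deriv g x = -deriv f x := by
    have := hder 1 x
    simp only [iteratedDeriv_one] at this
    rw [this]; norm_num; ring_nf
  have e5 : iteratedDeriv 2 g x = iteratedDeriv 2 f x := by
    rw [hder 2 x]; norm_num; ring_nf
  have e6 : iteratedDeriv 3 g c = -iteratedDeriv 3 f (2 * x - c) := by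
    rw [hder 3 c]; norm_num
  rw [e2, e3, e4, e5, e6] at hEq
  linarith [hEq]

private lemma key_est (f : ℝ → ℝ) (x ε : ℝ) (hε : 0 < ε)
    (hf : ContDiffOn ℝ 3 f (Set.Ioo (x - ε) (x + ε))) {ε' : ℝ} (hε' : 0 < ε') :
    ∃ δ > 0, δ ≤ ε ∧ ∀ s : ℝ, 0 < s → s < δ →
      |(f (x + s) - f (x - s)) / (2 * s) - deriv f x
        - s ^ 2 / 6 * iteratedDeriv 3 f x| ≤ ε' * s ^ 2 := by
  have hU : IsOpen (Set.Ioo (x - ε) (x + ε)) := isOpen_Ioo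
  have hxU : x ∈ Set.Ioo (x - ε) (x + ε) := by constructor <;> linarith
  have hc1 : ContinuousOn (iteratedDerivWithin 3 f (Set.Ioo (x - ε) (x + ε)))
      (Set.Ioo (x - ε) (x + ε)) :=
    hf.continuousOn_iteratedDerivWithin (le_refl _) hU.uniqueDiffOn
  have hc2 : ContinuousOn (iteratedDeriv 3 f) (Set.Ioo (x - ε) (x + ε)) :=
    hc1.congr fun y hy => (iterDeriv_open f hU 3 hy).symm
  have hc3 : ContinuousAt (iteratedDeriv 3 f) x := hc2.continuousAt (hU.mem_nhds hxU)
  obtain ⟨δ₀, hδ₀, hball⟩ := Metric.continuousAt_iff.mp hc3 ε' hε'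
  refine ⟨min δ₀ ε, by positivity, min_le_right _ _, fun s hs hsδ => ?_⟩
  have hsε : s < ε := lt_of_lt_of_le hsδ (min_le_right _ _)
  have hsδ₀ : s < δ₀ := lt_of_lt_of_le hsδ (min_le_left _ _)
  have hsubR : Set.Icc x (x + s) ⊆ Set.Ioo (x - ε) (x + ε) := by
    intro t ht; obtain ⟨h1, h2⟩ := ht; exact ⟨by linarith, by linarith⟩
  have hsubL : Set.Icc (x - s) x ⊆ Set.Ioo (x - ε) (x + ε) := by
    intro t ht; obtain ⟨h1, h2⟩ := ht; exact ⟨by linarith, by linarith⟩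
  obtain ⟨c₁, hc₁, e1⟩ := taylor2_right f x hU hf hs hsubR
  obtain ⟨c₂, hc₂, e2⟩ := taylor2_left f x hU hf hs hsubL
  have hb1 : |iteratedDeriv 3 f c₁ - iteratedDeriv 3 f x| < ε' := by
    have hd : dist c₁ x < δ₀ := by
      rw [Real.dist_eq, abs_lt]; obtain ⟨p, q⟩ := hc₁; exact ⟨by linarith, by linarith⟩
    have := hball hd; rwa [Real.dist_eq] at this
  have hb2 : |iteratedDeriv 3 f c₂ - iteratedDeriv 3 f x| < ε' := by
    have hd : dist c₂ x < δ₀ := by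
      rw [Real.dist_eq, abs_lt]; obtain ⟨p, q⟩ := hc₂; exact ⟨by linarith, by linarith⟩
    have := hball hd; rwa [Real.dist_eq] at this
  have h2s : (2 : ℝ) * s ≠ 0 := by positivity
  have hval : (f (x + s) - f (x - s)) / (2 * s) - deriv f x - s ^ 2 / 6 * iteratedDeriv 3 f x
      = s ^ 2 / 12 * ((iteratedDeriv 3 f c₁ - iteratedDeriv 3 f x)
        + (iteratedDeriv 3 f c₂ - iteratedDeriv 3 f x)) := by
    rw [e1, e2]; field_simp; ring
  rw [hval, abs_mul, abs_of_nonneg (by positivity : (0:ℝ) ≤ s ^ 2 / 12)]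
  have hsum : |(iteratedDeriv 3 f c₁ - iteratedDeriv 3 f x)
      + (iteratedDeriv 3 f c₂ - iteratedDeriv 3 f x)| ≤ 2 * ε' :=
    le_trans (abs_add_le _ _) (by linarith)
  nlinarith [sq_nonneg s, abs_nonneg ((iteratedDeriv 3 f c₁ - iteratedDeriv 3 f x)
      + (iteratedDeriv 3 f c₂ - iteratedDeriv 3 f x))]

theorem uniform_step_expectation_bias (f : ℝ → ℝ) (x : ℝ)
    (hf : ∃ ε > 0, ContDiffOn ℝ 3 f (Set.Ioo (x - ε) (x + ε))) :
    Tendsto (fun h : ℝ =>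
        (((1 / h) * ∫ s in (h / 2)..(3 * h / 2), (f (x + s) - f (x - s)) / (2 * s))
          - deriv f x - (13 * h ^ 2 / 72) * iteratedDeriv 3 f x) / h ^ 2)
      (nhdsWithin 0 (Set.Ioi 0)) (nhds 0)
    ∧ Tendsto (fun h : ℝ =>
        (1 / h) * ∫ s in (h / 2)..(3 * h / 2), (f (x + s) - f (x - s)) / (2 * s))
      (nhdsWithin 0 (Set.Ioi 0)) (nhds (deriv f x)) := by
  obtain ⟨ε, hε, hf3⟩ := hf
  set L := deriv f x with hL
  set M := iteratedDeriv 3 f x with hM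
  set g : ℝ → ℝ := fun s => (f (x + s) - f (x - s)) / (2 * s) with hg
  set Ex : ℝ → ℝ := fun h => (1 / h) * ∫ s in (h / 2)..(3 * h / 2), g s with hEx
  -- the key quantitative bound
  have bound : ∀ ε' > (0:ℝ), ∃ δ₁ > 0, ∀ h : ℝ, 0 < h → h < δ₁ →
      |(Ex h - L - 13 * h ^ 2 / 72 * M) / h ^ 2| ≤ 9 / 4 * ε' := by
    intro ε' hε'
    obtain ⟨δ, hδ0, hδε, hest⟩ := key_est f x ε hε hf3 hε'
    refine ⟨2 * δ / 3, by positivity, fun h hh hhδ => ?_⟩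
    have hne : h ≠ 0 := ne_of_gt hh
    set a := h / 2 with ha
    set b := 3 * h / 2 with hb
    have hab : a ≤ b := by rw [ha, hb]; linarith
    have hbδ : b < δ := by rw [hb]; linarith
    have hbε : b < ε := lt_of_lt_of_le hbδ hδε
    -- continuity of g on [a,b]
    have hfc : ContinuousOn f (Set.Ioo (x - ε) (x + ε)) := hf3.continuousOn
    have hgc : ContinuousOn g (Set.Icc a b) := by
      have m1 : ∀ s ∈ Set.Icc a b, x + s ∈ Set.Ioo (x - ε) (x + ε) := by
        intro s hs; obtain ⟨h1, h2⟩ := hs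
        constructor <;> [skip; skip] <;> rw [ha] at h1 <;> rw [hb] at h2 <;> linarith
      have m2 : ∀ s ∈ Set.Icc a b, x - s ∈ Set.Ioo (x - ε) (x + ε) := by
        intro s hs; obtain ⟨h1, h2⟩ := hs
        constructor <;> [skip; skip] <;> rw [ha] at h1 <;> rw [hb] at h2 <;> linarith
      have c1 : ContinuousOn (fun s : ℝ => f (x + s)) (Set.Icc a b) :=
        hfc.comp (continuous_const.add continuous_id).continuousOn m1
      have c2 : ContinuousOn (fun s : ℝ => f (x - s)) (Set.Icc a b) :=
        hfc.comp (continuous_const.sub continuous_id).continuousOn m2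
      exact (c1.sub c2).div (continuous_const.mul continuous_id).continuousOn
        (fun s hs => by
          have : 0 < s := lt_of_lt_of_le (by rw [ha]; linarith : (0:ℝ) < a) hs.1
          positivity)
    have hgint : IntervalIntegrable g MeasureTheory.volume a b := by
      apply ContinuousOn.intervalIntegrable
      rwa [Set.uIcc_of_le hab]
    have hpolyc : Continuous (fun s : ℝ => L + s ^ 2 / 6 * M) := by continuity
    have hpolyint : IntervalIntegrable (fun s : ℝ => L + s ^ 2 / 6 * M)
        MeasureTheory.volume a b := hpolyc.intervalIntegrable a b
    -- integral identity
    have e₁ : ∫ s in a..b, (g s - (L + s ^ 2 / 6 * M)) =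
        (∫ s in a..b, g s) - (h * L + 13 * h ^ 3 / 72 * M) := by
      rw [intervalIntegral.integral_sub hgint hpolyint]
      congr 1
      rw [intervalIntegral.integral_add (intervalIntegrable_const)
        ((by continuity : Continuous fun s : ℝ => s ^ 2 / 6 * M).intervalIntegrable a b),
        intervalIntegral.integral_const]
      have e₂ : (fun s : ℝ => s ^ 2 / 6 * M) = fun s : ℝ => (M / 6) * s ^ 2 := by
        funext s; ring
      rw [e₂, intervalIntegral.integral_const_mul, integral_pow]
      rw [ha, hb, smul_eq_mul]
      ring
    -- pointwise bound on the integrand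
    have hibd : ∀ s ∈ Set.uIoc a b, ‖g s - (L + s ^ 2 / 6 * M)‖ ≤ ε' * b ^ 2 := by
      intro s hs
      rw [Set.uIoc_of_le hab] at hs
      obtain ⟨h1, h2⟩ := hs
      have hs0 : 0 < s := lt_trans (by rw [ha]; linarith) h1
      have hsδ : s < δ := lt_of_le_of_lt h2 hbδ
      have := hest s hs0 hsδ
      have hsb : s ^ 2 ≤ b ^ 2 := by nlinarith
      calc ‖g s - (L + s ^ 2 / 6 * M)‖
          = |g s - L - s ^ 2 / 6 * M| := by rw [Real.norm_eq_abs]; ring_nf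
        _ ≤ ε' * s ^ 2 := this
        _ ≤ ε' * b ^ 2 := by nlinarith
    have hintbd : ‖∫ s in a..b, (g s - (L + s ^ 2 / 6 * M))‖ ≤ ε' * b ^ 2 * |b - a| :=
      intervalIntegral.norm_integral_le_of_norm_le_const hibd
    rw [e₁, Real.norm_eq_abs] at hintbd
    have hrepr : (Ex h - L - 13 * h ^ 2 / 72 * M) / h ^ 2 =
        ((∫ s in a..b, g s) - (h * L + 13 * h ^ 3 / 72 * M)) / h ^ 3 := by
      rw [hEx]; beta_reduce; rw [← ha, ← hb]
      field_simp
      ring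
    rw [hrepr, abs_div, abs_of_nonneg (by positivity : (0:ℝ) ≤ h ^ 3)]
    rw [div_le_iff₀ (by positivity : (0:ℝ) < h ^ 3)]
    have hba : |b - a| = h := by rw [ha, hb, abs_of_nonneg (by linarith)]; ring
    rw [hba] at hintbd
    calc |(∫ s in a..b, g s) - (h * L + 13 * h ^ 3 / 72 * M)| ≤ ε' * b ^ 2 * h := hintbd
      _ = 9 / 4 * ε' * h ^ 3 := by rw [hb]; ring
  -- part 1
  have part1 : Tendsto (fun h : ℝ => (Ex h - L - 13 * h ^ 2 / 72 * M) / h ^ 2)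
      (nhdsWithin 0 (Set.Ioi 0)) (nhds 0) := by
    rw [Metric.tendsto_nhdsWithin_nhds]
    intro ε₁ hε₁
    obtain ⟨δ₁, hδ₁, hbd⟩ := bound (ε₁ / 3) (by positivity)
    refine ⟨δ₁, hδ₁, fun {h} hh hd => ?_⟩
    rw [Real.dist_eq, sub_zero] at hd ⊢
    have hh' : 0 < h := hh
    have : |(Ex h - L - 13 * h ^ 2 / 72 * M) / h ^ 2| ≤ 9 / 4 * (ε₁ / 3) :=
      hbd h hh' (by rwa [abs_of_pos hh'] at hd)
    linarith
  constructor
  · exact part1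
  · have heq : ∀ᶠ h in nhdsWithin 0 (Set.Ioi 0),
        ((Ex h - L - 13 * h ^ 2 / 72 * M) / h ^ 2) * h ^ 2 + L + 13 * h ^ 2 / 72 * M = Ex h := by
      filter_upwards [self_mem_nhdsWithin] with h hh
      have hh' : (0:ℝ) < h := hh
      have h2 : (h : ℝ) ^ 2 ≠ 0 := by positivity
      field_simp
      ring
    have h2t : Tendsto (fun h : ℝ => h ^ 2) (nhdsWithin 0 (Set.Ioi 0)) (nhds 0) := by
      have : Tendsto (fun h : ℝ => h ^ 2) (nhds 0) (nhds 0) := by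
        have := (continuous_pow 2 (M := ℝ)).tendsto 0
        simpa using this
      exact this.mono_left nhdsWithin_le_nhds
    have t1 := part1.mul h2t
    have t2 : Tendsto (fun h : ℝ => 13 * h ^ 2 / 72 * M) (nhdsWithin 0 (Set.Ioi 0))
        (nhds (0 * (13 / 72 * M))) :=
      (h2t.mul_const (13 / 72 * M)).congr (fun h => by ring)
    have hfinal : Tendsto (fun h : ℝ =>
        ((Ex h - L - 13 * h ^ 2 / 72 * M) / h ^ 2) * h ^ 2 + L + 13 * h ^ 2 / 72 * M)
        (nhdsWithin 0 (Set.Ioi 0)) (nhds L) := by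
      have tc : Tendsto (fun _ : ℝ => L) (nhdsWithin 0 (Set.Ioi 0)) (nhds L) :=
        tendsto_const_nhds
      have := (t1.add tc).add t2
      simpa using this
    exact Tendsto.congr' heq hfinal
end
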